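/- arXiv:2410.03833 — 12 statements merged into one kernel-verified Lean document; each statement's English description precedes it below -/
import Mathlib

section
/- Theorem 3.1, part (i) (remaining loss of the fine-tuned model under distinct features): L(w_t, D_r) = 0; equivalently, X_rᵀ w_t = y_r, so the fine-tuned (unlearned) model fits the remaining data perfectly. -/
open Matrix

/-- remaining_loss_finetuned_distinct -/
theorem remaining_loss_finetuned_distinct
    (d_r d_f n_r n_f n_t : ℕ)
    (hd_r : 0 < d_r) (hd_f : 0 < d_f) (hn_r : 0 < n_r) (hn_f : 0 < n_f) (hn_t : 0 < n_t)
    (R : Matrix (Fin d_r) (Fin n_r) ℝ) (F : Matrix (Fin d_f) (Fin n_f) ℝ)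
    (hR : IsUnit (Rᵀ * R)) (hF : IsUnit (Fᵀ * F))
    (X_r : Matrix (Fin d_r ⊕ Fin d_f) (Fin n_r) ℝ) (hXr : X_r = Matrix.fromRows R 0)
    (X_f : Matrix (Fin d_r ⊕ Fin d_f) (Fin n_f) ℝ) (hXf : X_f = Matrix.fromRows 0 F)
    (X : Matrix (Fin d_r ⊕ Fin d_f) (Fin n_r ⊕ Fin n_f) ℝ) (hX : X = Matrix.fromCols X_r X_f)
    (hXinv : IsUnit (Xᵀ * X))
    (wr wf : Fin d_r ⊕ Fin d_f → ℝ)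
    (hwr : ∀ i, wr (Sum.inr i) = 0) (hwf : ∀ i, wf (Sum.inl i) = 0)
    (wstar : Fin d_r ⊕ Fin d_f → ℝ) (hws : wstar = wr + wf)
    (y_r : Fin n_r → ℝ) (hyr : y_r = X_rᵀ *ᵥ wstar)
    (y_f : Fin n_f → ℝ) (hyf : y_f = X_fᵀ *ᵥ wstar)
    (S : Matrix (Fin n_r) (Fin n_t) ℝ)
    (X_t : Matrix (Fin d_r ⊕ Fin d_f) (Fin n_t) ℝ) (hXt : X_t = X_r * S)
    (hXtinv : IsUnit (X_tᵀ * X_t))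
    (P P_r P_t : Matrix (Fin d_r ⊕ Fin d_f) (Fin d_r ⊕ Fin d_f) ℝ)
    (hP : P = X * (Xᵀ * X)⁻¹ * Xᵀ)
    (hPr : P_r = X_r * (X_rᵀ * X_r)⁻¹ * X_rᵀ)
    (hPt : P_t = X_t * (X_tᵀ * X_t)⁻¹ * X_tᵀ)
    (w_o w_t w_g : Fin d_r ⊕ Fin d_f → ℝ)
    (hwo : w_o = P *ᵥ wstar)
    (hwt : w_t = (1 - P_t) *ᵥ w_o + P_t *ᵥ wr)
    (hwg : w_g = P_r *ᵥ wr) :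
    (1 / (n_r : ℝ)) * ((X_rᵀ *ᵥ w_t - y_r) ⬝ᵥ (X_rᵀ *ᵥ w_t - y_r)) = 0 ∧ X_rᵀ *ᵥ w_t = y_r := by

  -- P fixes the column space of X, in particular X_r
  have hdet : IsUnit (Xᵀ * X).det := (Matrix.isUnit_iff_isUnit_det _).mp hXinv
  have hXXinv : (Xᵀ * X) * (Xᵀ * X)⁻¹ = 1 := Matrix.mul_nonsing_inv _ hdet
  have hXE : X * (Matrix.fromRows (1 : Matrix (Fin n_r) (Fin n_r) ℝ) 0 : Matrix (Fin n_r ⊕ Fin n_f) (Fin n_r) ℝ) = X_r := by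
    rw [hX, Matrix.fromCols_mul_fromRows]; simp
  have hXrP : X_rᵀ * P = X_rᵀ := by
    rw [hP, ← hXE, Matrix.transpose_mul]
    simp only [Matrix.mul_assoc]
    congr 1
    rw [← Matrix.mul_assoc Xᵀ X, ← Matrix.mul_assoc (Xᵀ * X), hXXinv, Matrix.one_mul]
  have hwoXr : X_rᵀ *ᵥ w_o = y_r := by
    rw [hwo, Matrix.mulVec_mulVec, hXrP, hyr]
  have hXrwf : X_rᵀ *ᵥ wf = 0 := by
    funext j
    rw [hXr]
    simp [Matrix.mulVec, dotProduct, Fintype.sum_sum_type, hwf]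
  have hXrws : X_rᵀ *ᵥ wstar = X_rᵀ *ᵥ wr := by
    rw [hws, Matrix.mulVec_add, hXrwf, add_zero]
  have hXtv : X_tᵀ *ᵥ (w_o - wr) = 0 := by
    rw [Matrix.mulVec_sub, hXt, Matrix.transpose_mul]
    rw [← Matrix.mulVec_mulVec, ← Matrix.mulVec_mulVec, hwoXr, hyr, hXrws]
    simp
  have hPtv : P_t *ᵥ (w_o - wr) = 0 := by
    rw [hPt, Matrix.mul_assoc, ← Matrix.mulVec_mulVec, ← Matrix.mulVec_mulVec, hXtv]
    simp
  have hwt' : X_rᵀ *ᵥ w_t = y_r := by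
    have : w_t = w_o - P_t *ᵥ (w_o - wr) := by
      rw [hwt, Matrix.sub_mulVec, Matrix.mulVec_sub, Matrix.one_mulVec]
      abel
    rw [this, hPtv, sub_zero, hwoXr]
  refine ⟨?_, hwt'⟩
  rw [hwt']
  simp
end

section
/- Theorem 3.1, part (ii) (unlearning loss of the fine-tuned model under distinct features): L(w_t, D_f) = 0; equivalently, X_fᵀ w_t = y_f, so the fine-tuned (unlearned) model still fits the forgetting data perfectly and fails to forget it. -/
open Matrix

/-- unlearning_loss_finetuned_distinct -/
theorem unlearning_loss_finetuned_distinct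
    (d_r d_f n_r n_f n_t : ℕ)
    (hd_r : 0 < d_r) (hd_f : 0 < d_f) (hn_r : 0 < n_r) (hn_f : 0 < n_f) (hn_t : 0 < n_t)
    (R : Matrix (Fin d_r) (Fin n_r) ℝ) (F : Matrix (Fin d_f) (Fin n_f) ℝ)
    (hR : IsUnit (Rᵀ * R)) (hF : IsUnit (Fᵀ * F))
    (X_r : Matrix (Fin d_r ⊕ Fin d_f) (Fin n_r) ℝ) (hXr : X_r = Matrix.fromRows R 0)
    (X_f : Matrix (Fin d_r ⊕ Fin d_f) (Fin n_f) ℝ) (hXf : X_f = Matrix.fromRows 0 F)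
    (X : Matrix (Fin d_r ⊕ Fin d_f) (Fin n_r ⊕ Fin n_f) ℝ) (hX : X = Matrix.fromCols X_r X_f)
    (hXinv : IsUnit (Xᵀ * X))
    (wr wf : Fin d_r ⊕ Fin d_f → ℝ)
    (hwr : ∀ i, wr (Sum.inr i) = 0) (hwf : ∀ i, wf (Sum.inl i) = 0)
    (wstar : Fin d_r ⊕ Fin d_f → ℝ) (hws : wstar = wr + wf)
    (y_r : Fin n_r → ℝ) (hyr : y_r = X_rᵀ *ᵥ wstar)
    (y_f : Fin n_f → ℝ) (hyf : y_f = X_fᵀ *ᵥ wstar)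
    (S : Matrix (Fin n_r) (Fin n_t) ℝ)
    (X_t : Matrix (Fin d_r ⊕ Fin d_f) (Fin n_t) ℝ) (hXt : X_t = X_r * S)
    (hXtinv : IsUnit (X_tᵀ * X_t))
    (P P_r P_t : Matrix (Fin d_r ⊕ Fin d_f) (Fin d_r ⊕ Fin d_f) ℝ)
    (hP : P = X * (Xᵀ * X)⁻¹ * Xᵀ)
    (hPr : P_r = X_r * (X_rᵀ * X_r)⁻¹ * X_rᵀ)
    (hPt : P_t = X_t * (X_tᵀ * X_t)⁻¹ * X_tᵀ)
    (w_o w_t w_g : Fin d_r ⊕ Fin d_f → ℝ)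
    (hwo : w_o = P *ᵥ wstar)
    (hwt : w_t = (1 - P_t) *ᵥ w_o + P_t *ᵥ wr)
    (hwg : w_g = P_r *ᵥ wr) :
    (1 / (n_f : ℝ)) * ((X_fᵀ *ᵥ w_t - y_f) ⬝ᵥ (X_fᵀ *ᵥ w_t - y_f)) = 0 ∧ X_fᵀ *ᵥ w_t = y_f := by

  have hXfXr : X_fᵀ * X_r = 0 := by
    rw [hXf, hXr, transpose_fromRows, fromCols_mul_fromRows]
    simp
  have hXfPt : X_fᵀ * P_t = 0 := by
    rw [hPt, hXt]
    simp only [← Matrix.mul_assoc, hXfXr]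
    simp
  have hXP : Xᵀ * P = Xᵀ := by
    rw [hP]
    simp only [← Matrix.mul_assoc]
    rw [Matrix.mul_nonsing_inv _ ((Matrix.isUnit_iff_isUnit_det _).mp hXinv), Matrix.one_mul]
  have hXfP : X_fᵀ * P = X_fᵀ := by
    have h : Matrix.fromRows (X_rᵀ * P) (X_fᵀ * P) = Matrix.fromRows X_rᵀ X_fᵀ := by
      rw [← fromRows_mul, ← transpose_fromCols, ← hX, hXP, hX, transpose_fromCols]
    funext i j
    have := congrFun (congrFun h (Sum.inr i)) j
    simpa using this
  have key : X_fᵀ *ᵥ w_t = y_f := by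
    rw [hwt, hyf, mulVec_add, sub_mulVec, one_mulVec, mulVec_sub, mulVec_mulVec, hXfPt,
      zero_mulVec, sub_zero, mulVec_mulVec, hXfPt, zero_mulVec, add_zero, hwo,
      mulVec_mulVec, hXfP]
  exact ⟨by rw [key]; simp, key⟩
end

section
/- Theorem 3.1, part (iv) (unlearning loss of the golden model under distinct features): L(w_g, D_f) = ‖w_*^f‖²_{(1/n_f)·X_f X_fᵀ}, i.e., (1/n_f)·‖X_fᵀ w_g − y_f‖₂² = (1/n_f)·(w_*^f)ᵀ X_f X_fᵀ w_*^f. -/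
open Matrix

/-- unlearning_loss_golden_distinct -/
theorem unlearning_loss_golden_distinct
    (d_r d_f n_r n_f n_t : ℕ)
    (hd_r : 0 < d_r) (hd_f : 0 < d_f) (hn_r : 0 < n_r) (hn_f : 0 < n_f) (hn_t : 0 < n_t)
    (R : Matrix (Fin d_r) (Fin n_r) ℝ) (F : Matrix (Fin d_f) (Fin n_f) ℝ)
    (hR : IsUnit (Rᵀ * R)) (hF : IsUnit (Fᵀ * F))
    (X_r : Matrix (Fin d_r ⊕ Fin d_f) (Fin n_r) ℝ) (hXr : X_r = Matrix.fromRows R 0)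
    (X_f : Matrix (Fin d_r ⊕ Fin d_f) (Fin n_f) ℝ) (hXf : X_f = Matrix.fromRows 0 F)
    (X : Matrix (Fin d_r ⊕ Fin d_f) (Fin n_r ⊕ Fin n_f) ℝ) (hX : X = Matrix.fromCols X_r X_f)
    (hXinv : IsUnit (Xᵀ * X))
    (wr wf : Fin d_r ⊕ Fin d_f → ℝ)
    (hwr : ∀ i, wr (Sum.inr i) = 0) (hwf : ∀ i, wf (Sum.inl i) = 0)
    (wstar : Fin d_r ⊕ Fin d_f → ℝ) (hws : wstar = wr + wf)
    (y_r : Fin n_r → ℝ) (hyr : y_r = X_rᵀ *ᵥ wstar)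
    (y_f : Fin n_f → ℝ) (hyf : y_f = X_fᵀ *ᵥ wstar)
    (S : Matrix (Fin n_r) (Fin n_t) ℝ)
    (X_t : Matrix (Fin d_r ⊕ Fin d_f) (Fin n_t) ℝ) (hXt : X_t = X_r * S)
    (hXtinv : IsUnit (X_tᵀ * X_t))
    (P P_r P_t : Matrix (Fin d_r ⊕ Fin d_f) (Fin d_r ⊕ Fin d_f) ℝ)
    (hP : P = X * (Xᵀ * X)⁻¹ * Xᵀ)
    (hPr : P_r = X_r * (X_rᵀ * X_r)⁻¹ * X_rᵀ)
    (hPt : P_t = X_t * (X_tᵀ * X_t)⁻¹ * X_tᵀ)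
    (w_o w_t w_g : Fin d_r ⊕ Fin d_f → ℝ)
    (hwo : w_o = P *ᵥ wstar)
    (hwt : w_t = (1 - P_t) *ᵥ w_o + P_t *ᵥ wr)
    (hwg : w_g = P_r *ᵥ wr) :
    (1 / (n_f : ℝ)) * ((X_fᵀ *ᵥ w_g - y_f) ⬝ᵥ (X_fᵀ *ᵥ w_g - y_f)) =
      (1 / (n_f : ℝ)) * (wf ⬝ᵥ ((X_f * X_fᵀ) *ᵥ wf)) := by
  have hXfXr : X_fᵀ * X_r = 0 := by
    rw [hXf, hXr, transpose_fromRows, fromCols_mul_fromRows]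
    simp
  have hXfwr : X_fᵀ *ᵥ wr = 0 := by
    funext j
    rw [hXf]
    simp only [mulVec, dotProduct, transpose_apply]
    apply Finset.sum_eq_zero
    intro i _
    cases i with
    | inl i => simp [Matrix.fromRows_apply_inl]
    | inr i => simp [hwr i]
  have h1 : X_fᵀ *ᵥ w_g = 0 := by
    rw [hwg, mulVec_mulVec, hPr, ← Matrix.mul_assoc, ← Matrix.mul_assoc, hXfXr,
      Matrix.zero_mul, Matrix.zero_mul, zero_mulVec]
  have h2 : y_f = X_fᵀ *ᵥ wf := by
    rw [hyf, hws, mulVec_add, hXfwr, zero_add]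
  rw [h1, h2, zero_sub, dotProduct_neg, neg_dotProduct, neg_neg,
    ← mulVec_mulVec, dotProduct_mulVec, vecMul_transpose, mulVec_mulVec, dotProduct_comm]
end

section
/- Decomposition of the fine-tuned model under distinct features (Equation (5) of the paper): w_t = P w_*^r + (P − P_t) w_*^f, i.e., the unlearned model splits into a component P w_*^r preserving accuracy on the remaining data and a residual component (P − P_t) w_*^f of the forgetting data. -/
open Matrix

/-- finetuned_decomposition_distinct -/
theorem finetuned_decomposition_distinct
    (d_r d_f n_r n_f n_t : ℕ)
    (hd_r : 0 < d_r) (hd_f : 0 < d_f) (hn_r : 0 < n_r) (hn_f : 0 < n_f) (hn_t : 0 < n_t)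
    (R : Matrix (Fin d_r) (Fin n_r) ℝ) (F : Matrix (Fin d_f) (Fin n_f) ℝ)
    (hR : IsUnit (Rᵀ * R)) (hF : IsUnit (Fᵀ * F))
    (X_r : Matrix (Fin d_r ⊕ Fin d_f) (Fin n_r) ℝ) (hXr : X_r = Matrix.fromRows R 0)
    (X_f : Matrix (Fin d_r ⊕ Fin d_f) (Fin n_f) ℝ) (hXf : X_f = Matrix.fromRows 0 F)
    (X : Matrix (Fin d_r ⊕ Fin d_f) (Fin n_r ⊕ Fin n_f) ℝ) (hX : X = Matrix.fromCols X_r X_f)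
    (hXinv : IsUnit (Xᵀ * X))
    (wr wf : Fin d_r ⊕ Fin d_f → ℝ)
    (hwr : ∀ i, wr (Sum.inr i) = 0) (hwf : ∀ i, wf (Sum.inl i) = 0)
    (wstar : Fin d_r ⊕ Fin d_f → ℝ) (hws : wstar = wr + wf)
    (y_r : Fin n_r → ℝ) (hyr : y_r = X_rᵀ *ᵥ wstar)
    (y_f : Fin n_f → ℝ) (hyf : y_f = X_fᵀ *ᵥ wstar)
    (S : Matrix (Fin n_r) (Fin n_t) ℝ)
    (X_t : Matrix (Fin d_r ⊕ Fin d_f) (Fin n_t) ℝ) (hXt : X_t = X_r * S)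
    (hXtinv : IsUnit (X_tᵀ * X_t))
    (P P_r P_t : Matrix (Fin d_r ⊕ Fin d_f) (Fin d_r ⊕ Fin d_f) ℝ)
    (hP : P = X * (Xᵀ * X)⁻¹ * Xᵀ)
    (hPr : P_r = X_r * (X_rᵀ * X_r)⁻¹ * X_rᵀ)
    (hPt : P_t = X_t * (X_tᵀ * X_t)⁻¹ * X_tᵀ)
    (w_o w_t w_g : Fin d_r ⊕ Fin d_f → ℝ)
    (hwo : w_o = P *ᵥ wstar)
    (hwt : w_t = (1 - P_t) *ᵥ w_o + P_t *ᵥ wr)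
    (hwg : w_g = P_r *ᵥ wr) :
    w_t = P *ᵥ wr + (P - P_t) *ᵥ wf := by
  have hPX : P * X = X := by
    rw [hP, Matrix.mul_assoc, Matrix.mul_assoc, Matrix.nonsing_inv_mul _ ((Matrix.isUnit_iff_isUnit_det _).mp hXinv), Matrix.mul_one]
  have hXrX : X * Matrix.fromRows (1 : Matrix (Fin n_r) (Fin n_r) ℝ) (0 : Matrix (Fin n_f) (Fin n_r) ℝ) = X_r := by
    rw [hX, Matrix.fromCols_mul_fromRows, Matrix.mul_one, Matrix.mul_zero, add_zero]
  have hPXt : P * X_t = X_t := by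
    rw [hXt, ← hXrX, ← Matrix.mul_assoc, ← Matrix.mul_assoc, hPX]
  have hPsym : Pᵀ = P := by
    rw [hP]
    simp only [Matrix.transpose_mul, Matrix.transpose_transpose, Matrix.transpose_nonsing_inv]
    rw [← Matrix.mul_assoc]
  have hXtP : X_tᵀ * P = X_tᵀ := by
    calc X_tᵀ * P = X_tᵀ * Pᵀ := by rw [hPsym]
    _ = (P * X_t)ᵀ := by rw [Matrix.transpose_mul]
    _ = X_tᵀ := by rw [hPXt]
  have hPtP : P_t * P = P_t := by
    rw [hPt, Matrix.mul_assoc, Matrix.mul_assoc, hXtP, ← Matrix.mul_assoc]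
  rw [hwt, hwo, hws, Matrix.mulVec_mulVec, sub_mul, one_mul, hPtP]
  simp only [Matrix.sub_mulVec, Matrix.mulVec_add]
  ring_nf
end

section
/- Naive fine-tuning returns the pretrained model under distinct features: w_t = w_o, i.e., the unlearned model obtained by fine-tuning on a subset of the remaining data is exactly equal to the pretrained model, so fine-tuning removes no information about the forgetting data. -/
open Matrix

/-- finetuned_equals_pretrained_distinct -/
theorem finetuned_equals_pretrained_distinct
    (d_r d_f n_r n_f n_t : ℕ)
    (hd_r : 0 < d_r) (hd_f : 0 < d_f) (hn_r : 0 < n_r) (hn_f : 0 < n_f) (hn_t : 0 < n_t)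
    (R : Matrix (Fin d_r) (Fin n_r) ℝ) (F : Matrix (Fin d_f) (Fin n_f) ℝ)
    (hR : IsUnit (Rᵀ * R)) (hF : IsUnit (Fᵀ * F))
    (X_r : Matrix (Fin d_r ⊕ Fin d_f) (Fin n_r) ℝ) (hXr : X_r = Matrix.fromRows R 0)
    (X_f : Matrix (Fin d_r ⊕ Fin d_f) (Fin n_f) ℝ) (hXf : X_f = Matrix.fromRows 0 F)
    (X : Matrix (Fin d_r ⊕ Fin d_f) (Fin n_r ⊕ Fin n_f) ℝ) (hX : X = Matrix.fromCols X_r X_f)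
    (hXinv : IsUnit (Xᵀ * X))
    (wr wf : Fin d_r ⊕ Fin d_f → ℝ)
    (hwr : ∀ i, wr (Sum.inr i) = 0) (hwf : ∀ i, wf (Sum.inl i) = 0)
    (wstar : Fin d_r ⊕ Fin d_f → ℝ) (hws : wstar = wr + wf)
    (y_r : Fin n_r → ℝ) (hyr : y_r = X_rᵀ *ᵥ wstar)
    (y_f : Fin n_f → ℝ) (hyf : y_f = X_fᵀ *ᵥ wstar)
    (S : Matrix (Fin n_r) (Fin n_t) ℝ)
    (X_t : Matrix (Fin d_r ⊕ Fin d_f) (Fin n_t) ℝ) (hXt : X_t = X_r * S)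
    (hXtinv : IsUnit (X_tᵀ * X_t))
    (P P_r P_t : Matrix (Fin d_r ⊕ Fin d_f) (Fin d_r ⊕ Fin d_f) ℝ)
    (hP : P = X * (Xᵀ * X)⁻¹ * Xᵀ)
    (hPr : P_r = X_r * (X_rᵀ * X_r)⁻¹ * X_rᵀ)
    (hPt : P_t = X_t * (X_tᵀ * X_t)⁻¹ * X_tᵀ)
    (w_o w_t w_g : Fin d_r ⊕ Fin d_f → ℝ)
    (hwo : w_o = P *ᵥ wstar)
    (hwt : w_t = (1 - P_t) *ᵥ w_o + P_t *ᵥ wr)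
    (hwg : w_g = P_r *ᵥ wr) :
    w_t = w_o := by
  -- X_rᵀ kills wf
  have hker : X_rᵀ *ᵥ wf = 0 := by
    funext j
    simp [hXr, Matrix.mulVec, dotProduct, Fintype.sum_sum_type,
      Matrix.fromRows_apply_inl, Matrix.fromRows_apply_inr, hwf]
  -- P * X = X
  have hdet : IsUnit (Xᵀ * X).det := (Matrix.isUnit_iff_isUnit_det _).mp hXinv
  have hPX : P * X = X := by
    rw [hP, Matrix.mul_assoc, Matrix.mul_assoc,
      Matrix.nonsing_inv_mul _ hdet, Matrix.mul_one]
  -- P * X_r = X_r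
  have hXXr : X * Matrix.fromRows (1 : Matrix (Fin n_r) (Fin n_r) ℝ)
      (0 : Matrix (Fin n_f) (Fin n_r) ℝ) = X_r := by
    rw [hX, Matrix.fromCols_mul_fromRows, Matrix.mul_one, Matrix.mul_zero, add_zero]
  have hPXr : P * X_r = X_r := by
    rw [← hXXr, ← Matrix.mul_assoc, hPX]
  -- P symmetric
  have hPsym : Pᵀ = P := by
    rw [hP, Matrix.transpose_mul, Matrix.transpose_mul, Matrix.transpose_transpose,
      Matrix.transpose_nonsing_inv, Matrix.transpose_mul, Matrix.transpose_transpose,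
      Matrix.mul_assoc]
  have hXrP : X_rᵀ * P = X_rᵀ := by
    calc X_rᵀ * P = (Pᵀ * X_r)ᵀ := by rw [Matrix.transpose_mul, Matrix.transpose_transpose]
    _ = X_rᵀ := by rw [hPsym, hPXr]
  -- X_tᵀ w_o = X_tᵀ wr
  have hXtw : X_tᵀ *ᵥ w_o = X_tᵀ *ᵥ wr := by
    have h1 : X_rᵀ *ᵥ w_o = X_rᵀ *ᵥ wr := by
      rw [hwo, Matrix.mulVec_mulVec, hXrP, hws, Matrix.mulVec_add, hker, add_zero]
    rw [hXt, Matrix.transpose_mul, ← Matrix.mulVec_mulVec, h1, Matrix.mulVec_mulVec]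
  have hPtw : P_t *ᵥ w_o = P_t *ᵥ wr := by
    rw [hPt, ← Matrix.mulVec_mulVec, ← Matrix.mulVec_mulVec, hXtw,
      Matrix.mulVec_mulVec, Matrix.mulVec_mulVec]
  rw [hwt, Matrix.sub_mulVec, Matrix.one_mulVec, hPtw]
  abel
end

section
/- Naive fine-tuning returns the pretrained model under overlapping features: w_t = w_o, i.e., even when the remaining and forgetting data share overlapping features, the model obtained by fine-tuning on a subset of the remaining data equals the pretrained model, so all information about the forgetting data is preserved. -/
open Matrix

/-- finetuned_equals_pretrained_overlap -/
theorem finetuned_equals_pretrained_overlap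
    (d_r d_lap d_f n_r n_f n_t : ℕ)
    (hd_r : 0 < d_r) (hd_lap : 0 < d_lap) (hd_f : 0 < d_f)
    (hn_r : 0 < n_r) (hn_f : 0 < n_f) (hn_t : 0 < n_t)
    (R : Matrix (Fin d_r) (Fin n_r) ℝ) (L1 : Matrix (Fin d_lap) (Fin n_r) ℝ)
    (L2 : Matrix (Fin d_lap) (Fin n_f) ℝ) (F : Matrix (Fin d_f) (Fin n_f) ℝ)
    (X_r : Matrix (Fin d_r ⊕ (Fin d_lap ⊕ Fin d_f)) (Fin n_r) ℝ)
    (hXr : X_r = Matrix.fromRows R (Matrix.fromRows L1 0))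
    (X_f : Matrix (Fin d_r ⊕ (Fin d_lap ⊕ Fin d_f)) (Fin n_f) ℝ)
    (hXf : X_f = Matrix.fromRows 0 (Matrix.fromRows L2 F))
    (X : Matrix (Fin d_r ⊕ (Fin d_lap ⊕ Fin d_f)) (Fin n_r ⊕ Fin n_f) ℝ)
    (hX : X = Matrix.fromCols X_r X_f)
    (hXinv : IsUnit (Xᵀ * X)) (hXrinv : IsUnit (X_rᵀ * X_r)) (hXfinv : IsUnit (X_fᵀ * X_f))
    (wr wl wf : Fin d_r ⊕ (Fin d_lap ⊕ Fin d_f) → ℝ)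
    (hwr : ∀ i, wr (Sum.inr i) = 0)
    (hwl1 : ∀ i, wl (Sum.inl i) = 0) (hwl2 : ∀ i, wl (Sum.inr (Sum.inr i)) = 0)
    (hwf1 : ∀ i, wf (Sum.inl i) = 0) (hwf2 : ∀ i, wf (Sum.inr (Sum.inl i)) = 0)
    (wstar : Fin d_r ⊕ (Fin d_lap ⊕ Fin d_f) → ℝ) (hws : wstar = wr + wl + wf)
    (y_r : Fin n_r → ℝ) (hyr : y_r = X_rᵀ *ᵥ wstar)
    (y_f : Fin n_f → ℝ) (hyf : y_f = X_fᵀ *ᵥ wstar)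
    (S : Matrix (Fin n_r) (Fin n_t) ℝ)
    (X_t : Matrix (Fin d_r ⊕ (Fin d_lap ⊕ Fin d_f)) (Fin n_t) ℝ) (hXt : X_t = X_r * S)
    (hXtinv : IsUnit (X_tᵀ * X_t))
    (P P_r P_t : Matrix (Fin d_r ⊕ (Fin d_lap ⊕ Fin d_f)) (Fin d_r ⊕ (Fin d_lap ⊕ Fin d_f)) ℝ)
    (hP : P = X * (Xᵀ * X)⁻¹ * Xᵀ)
    (hPr : P_r = X_r * (X_rᵀ * X_r)⁻¹ * X_rᵀ)
    (hPt : P_t = X_t * (X_tᵀ * X_t)⁻¹ * X_tᵀ)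
    (w_o w_t w_g : Fin d_r ⊕ (Fin d_lap ⊕ Fin d_f) → ℝ)
    (hwo : w_o = P *ᵥ wstar)
    (hwt : w_t = (1 - P_t) *ᵥ w_o + P_t *ᵥ (wr + wl))
    (hwg : w_g = P_r *ᵥ (wr + wl)) :
    w_t = w_o := by

  have hdet : IsUnit (Xᵀ * X).det := (Matrix.isUnit_iff_isUnit_det _).mp hXinv
  have hPX : P * X = X := by
    rw [hP, Matrix.mul_assoc, Matrix.mul_assoc,Matrix.nonsing_inv_mul _ hdet]
    simp
  have h1 : X * Matrix.fromRows (1 : Matrix (Fin n_r) (Fin n_r) ℝ)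
      (0 : Matrix (Fin n_f) (Fin n_r) ℝ) = X_r := by
    rw [hX, Matrix.fromCols_mul_fromRows]
    simp
  have hPXr : P * X_r = X_r := by
    rw [← h1, ← Matrix.mul_assoc, hPX]
  have hPsym : Pᵀ = P := by
    rw [hP]
    simp [Matrix.transpose_mul, Matrix.transpose_nonsing_inv, Matrix.mul_assoc]
  have hXrP : X_rᵀ * P = X_rᵀ := by
    have := congrArg Matrix.transpose (show Pᵀ * X_r = X_r by rw [hPsym, hPXr])
    simpa [Matrix.transpose_mul] using this
  have hXtP : X_tᵀ * P = X_tᵀ := by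
    rw [hXt, Matrix.transpose_mul, Matrix.mul_assoc, hXrP]
  have hPtP : P_t * P = P_t := by
    rw [hPt, Matrix.mul_assoc, hXtP]
  have hXrwf : X_rᵀ *ᵥ wf = 0 := by
    funext j
    simp [hXr, Matrix.mulVec, dotProduct, Fintype.sum_sum_type, hwf1, hwf2]
  have hXtwf : X_tᵀ *ᵥ wf = 0 := by
    rw [hXt, Matrix.transpose_mul, ← Matrix.mulVec_mulVec, hXrwf, Matrix.mulVec_zero]
  have hPtwf : P_t *ᵥ wf = 0 := by
    rw [hPt, ← Matrix.mulVec_mulVec, hXtwf, Matrix.mulVec_zero]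
  have h : P_t *ᵥ w_o = P_t *ᵥ (wr + wl) := by
    rw [hwo, Matrix.mulVec_mulVec, hPtP, hws, Matrix.mulVec_add, hPtwf, add_zero]
  rw [hwt, Matrix.sub_mulVec, Matrix.one_mulVec, h]
  abel
end

section
/- Theorem 3.2, part (i) (remaining loss of the fine-tuned model under overlapping features): L(w_t, D_r) = 0; equivalently, X_rᵀ w_t = y_r. -/
open Matrix

/-- remaining_loss_finetuned_overlap -/
theorem remaining_loss_finetuned_overlap
    (d_r d_lap d_f n_r n_f n_t : ℕ)
    (hd_r : 0 < d_r) (hd_lap : 0 < d_lap) (hd_f : 0 < d_f)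
    (hn_r : 0 < n_r) (hn_f : 0 < n_f) (hn_t : 0 < n_t)
    (R : Matrix (Fin d_r) (Fin n_r) ℝ) (L1 : Matrix (Fin d_lap) (Fin n_r) ℝ)
    (L2 : Matrix (Fin d_lap) (Fin n_f) ℝ) (F : Matrix (Fin d_f) (Fin n_f) ℝ)
    (X_r : Matrix (Fin d_r ⊕ (Fin d_lap ⊕ Fin d_f)) (Fin n_r) ℝ)
    (hXr : X_r = Matrix.fromRows R (Matrix.fromRows L1 0))
    (X_f : Matrix (Fin d_r ⊕ (Fin d_lap ⊕ Fin d_f)) (Fin n_f) ℝ)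
    (hXf : X_f = Matrix.fromRows 0 (Matrix.fromRows L2 F))
    (X : Matrix (Fin d_r ⊕ (Fin d_lap ⊕ Fin d_f)) (Fin n_r ⊕ Fin n_f) ℝ)
    (hX : X = Matrix.fromCols X_r X_f)
    (hXinv : IsUnit (Xᵀ * X)) (hXrinv : IsUnit (X_rᵀ * X_r)) (hXfinv : IsUnit (X_fᵀ * X_f))
    (wr wl wf : Fin d_r ⊕ (Fin d_lap ⊕ Fin d_f) → ℝ)
    (hwr : ∀ i, wr (Sum.inr i) = 0)
    (hwl1 : ∀ i, wl (Sum.inl i) = 0) (hwl2 : ∀ i, wl (Sum.inr (Sum.inr i)) = 0)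
    (hwf1 : ∀ i, wf (Sum.inl i) = 0) (hwf2 : ∀ i, wf (Sum.inr (Sum.inl i)) = 0)
    (wstar : Fin d_r ⊕ (Fin d_lap ⊕ Fin d_f) → ℝ) (hws : wstar = wr + wl + wf)
    (y_r : Fin n_r → ℝ) (hyr : y_r = X_rᵀ *ᵥ wstar)
    (y_f : Fin n_f → ℝ) (hyf : y_f = X_fᵀ *ᵥ wstar)
    (S : Matrix (Fin n_r) (Fin n_t) ℝ)
    (X_t : Matrix (Fin d_r ⊕ (Fin d_lap ⊕ Fin d_f)) (Fin n_t) ℝ) (hXt : X_t = X_r * S)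
    (hXtinv : IsUnit (X_tᵀ * X_t))
    (P P_r P_t : Matrix (Fin d_r ⊕ (Fin d_lap ⊕ Fin d_f)) (Fin d_r ⊕ (Fin d_lap ⊕ Fin d_f)) ℝ)
    (hP : P = X * (Xᵀ * X)⁻¹ * Xᵀ)
    (hPr : P_r = X_r * (X_rᵀ * X_r)⁻¹ * X_rᵀ)
    (hPt : P_t = X_t * (X_tᵀ * X_t)⁻¹ * X_tᵀ)
    (w_o w_t w_g : Fin d_r ⊕ (Fin d_lap ⊕ Fin d_f) → ℝ)
    (hwo : w_o = P *ᵥ wstar)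
    (hwt : w_t = (1 - P_t) *ᵥ w_o + P_t *ᵥ (wr + wl))
    (hwg : w_g = P_r *ᵥ (wr + wl)) :
    (1 / (n_r : ℝ)) * ((X_rᵀ *ᵥ w_t - y_r) ⬝ᵥ (X_rᵀ *ᵥ w_t - y_r)) = 0 ∧ X_rᵀ *ᵥ w_t = y_r := by
  have hXrwf : X_rᵀ *ᵥ wf = 0 := by
    subst hXr
    funext j
    simp [Matrix.mulVec, dotProduct, Fintype.sum_sum_type,
      hwf1, hwf2]
  have hXtXinv : (Xᵀ * X) * (Xᵀ * X)⁻¹ = 1 :=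
    Matrix.mul_nonsing_inv _ ((Matrix.isUnit_iff_isUnit_det _).mp hXinv)
  have key : Xᵀ *ᵥ w_o = Xᵀ *ᵥ wstar := by
    have hmat : Xᵀ * (X * (Xᵀ * X)⁻¹ * Xᵀ) = Xᵀ := by
      calc Xᵀ * (X * (Xᵀ * X)⁻¹ * Xᵀ) = ((Xᵀ * X) * (Xᵀ * X)⁻¹) * Xᵀ := by
            simp only [Matrix.mul_assoc]
        _ = Xᵀ := by rw [hXtXinv, Matrix.one_mul]
    rw [hwo, hP, Matrix.mulVec_mulVec, hmat]
  have hXrwo : X_rᵀ *ᵥ w_o = X_rᵀ *ᵥ wstar := by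
    funext j
    have h := congrFun key (Sum.inl j)
    rw [hX, Matrix.transpose_fromCols, Matrix.fromRows_mulVec,
      Matrix.fromRows_mulVec] at h
    exact h
  have hXrws : X_rᵀ *ᵥ wstar = X_rᵀ *ᵥ (wr + wl) := by
    rw [hws]; simp [Matrix.mulVec_add, hXrwf]
  have hXtw : X_tᵀ *ᵥ w_o = X_tᵀ *ᵥ (wr + wl) := by
    rw [hXt, Matrix.transpose_mul, ← Matrix.mulVec_mulVec, ← Matrix.mulVec_mulVec,
      hXrwo, hXrws]
  have hPtw : P_t *ᵥ w_o = P_t *ᵥ (wr + wl) := by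
    rw [hPt, ← Matrix.mulVec_mulVec, ← Matrix.mulVec_mulVec, hXtw, Matrix.mulVec_mulVec, Matrix.mulVec_mulVec]
  have hwt' : X_rᵀ *ᵥ w_t = y_r := by
    rw [hwt, Matrix.sub_mulVec, Matrix.one_mulVec, hPtw, sub_add_cancel, hXrwo,
      hXrws, ← hXrws, ← hyr]
  exact ⟨by rw [hwt', sub_self]; simp, hwt'⟩
end

section
/- Theorem 4.1, distinct-features scenario, remaining loss: after removing the forgetting-feature components from the pretrained model, the regularized fine-tuned model ŵ_t satisfies L(ŵ_t, D_r) = 0; equivalently, X_rᵀ ŵ_t = y_r. -/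
open Matrix

/-- regularized_remaining_loss_distinct -/
theorem regularized_remaining_loss_distinct
    (d_r d_f n_r n_f n_t : ℕ)
    (hd_r : 0 < d_r) (hd_f : 0 < d_f) (hn_r : 0 < n_r) (hn_f : 0 < n_f) (hn_t : 0 < n_t)
    (R : Matrix (Fin d_r) (Fin n_r) ℝ) (F : Matrix (Fin d_f) (Fin n_f) ℝ)
    (hR : IsUnit (Rᵀ * R)) (hF : IsUnit (Fᵀ * F))
    (X_r : Matrix (Fin d_r ⊕ Fin d_f) (Fin n_r) ℝ) (hXr : X_r = Matrix.fromRows R 0)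
    (X_f : Matrix (Fin d_r ⊕ Fin d_f) (Fin n_f) ℝ) (hXf : X_f = Matrix.fromRows 0 F)
    (X : Matrix (Fin d_r ⊕ Fin d_f) (Fin n_r ⊕ Fin n_f) ℝ) (hX : X = Matrix.fromCols X_r X_f)
    (hXinv : IsUnit (Xᵀ * X))
    (wr wf : Fin d_r ⊕ Fin d_f → ℝ)
    (hwr : ∀ i, wr (Sum.inr i) = 0) (hwf : ∀ i, wf (Sum.inl i) = 0)
    (wstar : Fin d_r ⊕ Fin d_f → ℝ) (hws : wstar = wr + wf)
    (y_r : Fin n_r → ℝ) (hyr : y_r = X_rᵀ *ᵥ wstar)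
    (y_f : Fin n_f → ℝ) (hyf : y_f = X_fᵀ *ᵥ wstar)
    (S : Matrix (Fin n_r) (Fin n_t) ℝ)
    (X_t : Matrix (Fin d_r ⊕ Fin d_f) (Fin n_t) ℝ) (hXt : X_t = X_r * S)
    (hXtinv : IsUnit (X_tᵀ * X_t))
    (P P_r P_t : Matrix (Fin d_r ⊕ Fin d_f) (Fin d_r ⊕ Fin d_f) ℝ)
    (hP : P = X * (Xᵀ * X)⁻¹ * Xᵀ)
    (hPr : P_r = X_r * (X_rᵀ * X_r)⁻¹ * X_rᵀ)
    (hPt : P_t = X_t * (X_tᵀ * X_t)⁻¹ * X_tᵀ)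
    (hatw_o hatw_t : Fin d_r ⊕ Fin d_f → ℝ)
    (hhato : hatw_o = P *ᵥ wr)
    (hhatt : hatw_t = (1 - P_t) *ᵥ hatw_o + P_t *ᵥ wr) :
    (1 / (n_r : ℝ)) * ((X_rᵀ *ᵥ hatw_t - y_r) ⬝ᵥ (X_rᵀ *ᵥ hatw_t - y_r)) = 0 ∧
      X_rᵀ *ᵥ hatw_t = y_r := by

  have hXU : (Xᵀ * X)⁻¹ * (Xᵀ * X) = 1 :=
    Matrix.nonsing_inv_mul _ ((Matrix.isUnit_iff_isUnit_det _).mp hXinv)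
  have hXtU : (X_tᵀ * X_t)⁻¹ * (X_tᵀ * X_t) = 1 :=
    Matrix.nonsing_inv_mul _ ((Matrix.isUnit_iff_isUnit_det _).mp hXtinv)
  have hPX : P * X = X := by
    simp [hP, Matrix.mul_assoc, hXU]
  have hPsym : Pᵀ = P := by
    simp [hP, Matrix.transpose_mul, Matrix.transpose_nonsing_inv, Matrix.mul_assoc]
  have hPtsym : P_tᵀ = P_t := by
    simp [hPt, Matrix.transpose_mul, Matrix.transpose_nonsing_inv, Matrix.mul_assoc]
  have hXr_eq : X * Matrix.fromRows (1 : Matrix (Fin n_r) (Fin n_r) ℝ) (0 : Matrix (Fin n_f) (Fin n_r) ℝ) = X_r := by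
    rw [hX, Matrix.fromCols_mul_fromRows]
    simp
  have hPXr : P * X_r = X_r := by
    rw [← hXr_eq, ← Matrix.mul_assoc, hPX]
  have hPXt : P * X_t = X_t := by
    rw [hXt, ← Matrix.mul_assoc, hPXr]
  have hPPt : P * P_t = P_t := by
    rw [hPt, ← Matrix.mul_assoc, ← Matrix.mul_assoc, hPXt]
  have hPtP : P_t * P = P_t := by
    have h := congrArg Matrix.transpose hPPt
    simpa [Matrix.transpose_mul, hPsym, hPtsym] using h
  have hXrP : X_rᵀ * P = X_rᵀ := by
    have h := congrArg Matrix.transpose hPXr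
    simpa [Matrix.transpose_mul, hPsym] using h
  have hXrwf : X_rᵀ *ᵥ wf = 0 := by
    funext i
    rw [hXr]
    simp [Matrix.mulVec, dotProduct, Fintype.sum_sum_type, hwf]
  have hyr' : y_r = X_rᵀ *ᵥ wr := by
    rw [hyr, hws, Matrix.mulVec_add, hXrwf, add_zero]
  have hm : X_rᵀ * ((1 - P_t) * P) + X_rᵀ * P_t = X_rᵀ := by
    rw [Matrix.sub_mul, Matrix.one_mul, hPtP, Matrix.mul_sub, hXrP]
    abel
  have key : X_rᵀ *ᵥ hatw_t = y_r := by
    rw [hhatt, hhato, hyr']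
    simp only [Matrix.mulVec_add, Matrix.mulVec_mulVec]
    rw [← Matrix.add_mulVec, hm]
  refine ⟨?_, key⟩
  rw [key, sub_self]
  simp
end

section
/- Theorem 4.1, distinct-features scenario, unlearning loss: after removing the forgetting-feature components from the pretrained model, the regularized fine-tuned model ŵ_t satisfies L(ŵ_t, D_f) = ‖w_*^f‖²_{(1/n_f)·X_f X_fᵀ} = (1/n_f)·(w_*^f)ᵀ X_f X_fᵀ w_*^f, matching the unlearning loss of the golden model. -/
open Matrix

/-- regularized_unlearning_loss_distinct -/
theorem regularized_unlearning_loss_distinct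
    (d_r d_f n_r n_f n_t : ℕ)
    (hd_r : 0 < d_r) (hd_f : 0 < d_f) (hn_r : 0 < n_r) (hn_f : 0 < n_f) (hn_t : 0 < n_t)
    (R : Matrix (Fin d_r) (Fin n_r) ℝ) (F : Matrix (Fin d_f) (Fin n_f) ℝ)
    (hR : IsUnit (Rᵀ * R)) (hF : IsUnit (Fᵀ * F))
    (X_r : Matrix (Fin d_r ⊕ Fin d_f) (Fin n_r) ℝ) (hXr : X_r = Matrix.fromRows R 0)
    (X_f : Matrix (Fin d_r ⊕ Fin d_f) (Fin n_f) ℝ) (hXf : X_f = Matrix.fromRows 0 F)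
    (X : Matrix (Fin d_r ⊕ Fin d_f) (Fin n_r ⊕ Fin n_f) ℝ) (hX : X = Matrix.fromCols X_r X_f)
    (hXinv : IsUnit (Xᵀ * X))
    (wr wf : Fin d_r ⊕ Fin d_f → ℝ)
    (hwr : ∀ i, wr (Sum.inr i) = 0) (hwf : ∀ i, wf (Sum.inl i) = 0)
    (wstar : Fin d_r ⊕ Fin d_f → ℝ) (hws : wstar = wr + wf)
    (y_r : Fin n_r → ℝ) (hyr : y_r = X_rᵀ *ᵥ wstar)
    (y_f : Fin n_f → ℝ) (hyf : y_f = X_fᵀ *ᵥ wstar)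
    (S : Matrix (Fin n_r) (Fin n_t) ℝ)
    (X_t : Matrix (Fin d_r ⊕ Fin d_f) (Fin n_t) ℝ) (hXt : X_t = X_r * S)
    (hXtinv : IsUnit (X_tᵀ * X_t))
    (P P_r P_t : Matrix (Fin d_r ⊕ Fin d_f) (Fin d_r ⊕ Fin d_f) ℝ)
    (hP : P = X * (Xᵀ * X)⁻¹ * Xᵀ)
    (hPr : P_r = X_r * (X_rᵀ * X_r)⁻¹ * X_rᵀ)
    (hPt : P_t = X_t * (X_tᵀ * X_t)⁻¹ * X_tᵀ)
    (hatw_o hatw_t : Fin d_r ⊕ Fin d_f → ℝ)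
    (hhato : hatw_o = P *ᵥ wr)
    (hhatt : hatw_t = (1 - P_t) *ᵥ hatw_o + P_t *ᵥ wr) :
    (1 / (n_f : ℝ)) * ((X_fᵀ *ᵥ hatw_t - y_f) ⬝ᵥ (X_fᵀ *ᵥ hatw_t - y_f)) =
      (1 / (n_f : ℝ)) * (wf ⬝ᵥ ((X_f * X_fᵀ) *ᵥ wf)) := by
  -- Basic orthogonality facts
  have h1 : X_fᵀ * X_r = 0 := by
    rw [hXf, hXr, transpose_fromRows, fromCols_mul_fromRows]
    simp
  have h2 : X_fᵀ *ᵥ wr = 0 := by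
    have hw : wr = Sum.elim (wr ∘ Sum.inl) 0 := by
      funext i; cases i with
      | inl i => simp
      | inr i => simp [hwr]
    rw [hXf, transpose_fromRows, hw, fromCols_mulVec_sumElim]
    simp
  have h3 : X_rᵀ * X_f = 0 := by
    rw [hXf, hXr, transpose_fromRows, fromCols_mul_fromRows]
    simp
  have hXrXr : X_rᵀ * X_r = Rᵀ * R := by
    rw [hXr, transpose_fromRows, fromCols_mul_fromRows]; simp
  have hXfXf : X_fᵀ * X_f = Fᵀ * F := by
    rw [hXf, transpose_fromRows, fromCols_mul_fromRows]; simp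
  -- block structure of Xᵀ X and its inverse
  have hXtX : Xᵀ * X = fromBlocks (Rᵀ * R) 0 0 (Fᵀ * F) := by
    rw [hX, transpose_fromCols, fromRows_mul_fromCols, hXrXr, hXfXf, h1, h3]
  have hinv : (Xᵀ * X)⁻¹ = fromBlocks (Rᵀ * R)⁻¹ 0 0 (Fᵀ * F)⁻¹ := by
    rw [hXtX, inv_fromBlocks_zero₂₁_of_isUnit_iff _ _ _ (iff_of_true hR hF)]
    simp
  -- X_fᵀ * P = X_fᵀ
  have hXfP : X_fᵀ * P = X_fᵀ := by
    have hFFinv : Fᵀ * F * (Fᵀ * F)⁻¹ = 1 :=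
      mul_nonsing_inv _ ((Matrix.isUnit_iff_isUnit_det _).mp hF)
    rw [hP, hinv, ← Matrix.mul_assoc, ← Matrix.mul_assoc, hX, transpose_fromCols,
      mul_fromCols, h1, hXfXf, fromCols_mul_fromBlocks,
      fromCols_mul_fromRows]
    simp [hFFinv]
  -- X_fᵀ * P_t = 0
  have hXfPt : X_fᵀ * P_t = 0 := by
    rw [hPt, hXt, ← Matrix.mul_assoc, ← Matrix.mul_assoc, ← Matrix.mul_assoc, h1]
    simp
  -- the predictions on the forget set vanish
  have hpred : X_fᵀ *ᵥ hatw_t = 0 := by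
    rw [hhatt, Matrix.mulVec_add, Matrix.mulVec_mulVec, Matrix.mulVec_mulVec,
      Matrix.mul_sub, Matrix.mul_one, hXfPt, sub_zero, hhato,
      Matrix.mulVec_mulVec, hXfP, h2]
    simp
  -- y_f = X_fᵀ *ᵥ wf
  have hyf' : y_f = X_fᵀ *ᵥ wf := by
    rw [hyf, hws, Matrix.mulVec_add, h2, zero_add]
  rw [hpred, hyf', zero_sub, dotProduct_neg, neg_dotProduct, neg_neg,
    ← Matrix.mulVec_mulVec, dotProduct_mulVec, ← Matrix.mulVec_transpose,
    transpose_transpose, dotProduct_comm]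
end

section
/- Theorem 4.1, overlapping-features scenario, Option A (retaining overlapping features): the regularized fine-tuned model ŵ_t satisfies L(ŵ_t, D_r) = 0 and L(ŵ_t, D_f) = ‖P w_*^r + P w_*^lap − (w_*^f + w_*^lap)‖²_{(1/n_f)·X_f X_fᵀ}, i.e., (1/n_f)·‖X_fᵀ ŵ_t − y_f‖₂² = (1/n_f)·vᵀ X_f X_fᵀ v with v = P(w_*^r + w_*^lap) − (w_*^f + w_*^lap). -/
open Matrix

/-- regularized_optionA_overlap -/
theorem regularized_optionA_overlap
    (d_r d_lap d_f n_r n_f n_t : ℕ)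
    (hd_r : 0 < d_r) (hd_lap : 0 < d_lap) (hd_f : 0 < d_f)
    (hn_r : 0 < n_r) (hn_f : 0 < n_f) (hn_t : 0 < n_t)
    (R : Matrix (Fin d_r) (Fin n_r) ℝ) (L1 : Matrix (Fin d_lap) (Fin n_r) ℝ)
    (L2 : Matrix (Fin d_lap) (Fin n_f) ℝ) (F : Matrix (Fin d_f) (Fin n_f) ℝ)
    (X_r : Matrix (Fin d_r ⊕ (Fin d_lap ⊕ Fin d_f)) (Fin n_r) ℝ)
    (hXr : X_r = Matrix.fromRows R (Matrix.fromRows L1 0))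
    (X_f : Matrix (Fin d_r ⊕ (Fin d_lap ⊕ Fin d_f)) (Fin n_f) ℝ)
    (hXf : X_f = Matrix.fromRows 0 (Matrix.fromRows L2 F))
    (X : Matrix (Fin d_r ⊕ (Fin d_lap ⊕ Fin d_f)) (Fin n_r ⊕ Fin n_f) ℝ)
    (hX : X = Matrix.fromCols X_r X_f)
    (hXinv : IsUnit (Xᵀ * X)) (hXrinv : IsUnit (X_rᵀ * X_r)) (hXfinv : IsUnit (X_fᵀ * X_f))
    (wr wl wf : Fin d_r ⊕ (Fin d_lap ⊕ Fin d_f) → ℝ)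
    (hwr : ∀ i, wr (Sum.inr i) = 0)
    (hwl1 : ∀ i, wl (Sum.inl i) = 0) (hwl2 : ∀ i, wl (Sum.inr (Sum.inr i)) = 0)
    (hwf1 : ∀ i, wf (Sum.inl i) = 0) (hwf2 : ∀ i, wf (Sum.inr (Sum.inl i)) = 0)
    (wstar : Fin d_r ⊕ (Fin d_lap ⊕ Fin d_f) → ℝ) (hws : wstar = wr + wl + wf)
    (y_r : Fin n_r → ℝ) (hyr : y_r = X_rᵀ *ᵥ wstar)
    (y_f : Fin n_f → ℝ) (hyf : y_f = X_fᵀ *ᵥ wstar)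
    (S : Matrix (Fin n_r) (Fin n_t) ℝ)
    (X_t : Matrix (Fin d_r ⊕ (Fin d_lap ⊕ Fin d_f)) (Fin n_t) ℝ) (hXt : X_t = X_r * S)
    (hXtinv : IsUnit (X_tᵀ * X_t))
    (P P_r P_t : Matrix (Fin d_r ⊕ (Fin d_lap ⊕ Fin d_f)) (Fin d_r ⊕ (Fin d_lap ⊕ Fin d_f)) ℝ)
    (hP : P = X * (Xᵀ * X)⁻¹ * Xᵀ)
    (hPr : P_r = X_r * (X_rᵀ * X_r)⁻¹ * X_rᵀ)
    (hPt : P_t = X_t * (X_tᵀ * X_t)⁻¹ * X_tᵀ)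
    (hatw_o hatw_t : Fin d_r ⊕ (Fin d_lap ⊕ Fin d_f) → ℝ)
    (hhato : hatw_o = P *ᵥ (wr + wl))
    (hhatt : hatw_t = (1 - P_t) *ᵥ hatw_o + P_t *ᵥ (wr + wl)) :
    ((1 / (n_r : ℝ)) * ((X_rᵀ *ᵥ hatw_t - y_r) ⬝ᵥ (X_rᵀ *ᵥ hatw_t - y_r)) = 0) ∧
      (1 / (n_f : ℝ)) * ((X_fᵀ *ᵥ hatw_t - y_f) ⬝ᵥ (X_fᵀ *ᵥ hatw_t - y_f)) =
        (1 / (n_f : ℝ)) *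
          ((P *ᵥ (wr + wl) - (wf + wl)) ⬝ᵥ ((X_f * X_fᵀ) *ᵥ (P *ᵥ (wr + wl) - (wf + wl)))) := by
  -- abbreviation
  set u : Fin d_r ⊕ (Fin d_lap ⊕ Fin d_f) → ℝ := wr + wl with hu
  -- X_rᵀ annihilates wf
  have hXrwf : X_rᵀ *ᵥ wf = 0 := by
    funext j
    simp [hXr, mulVec, dotProduct, Fintype.sum_sum_type, hwf1, hwf2]
  -- X_fᵀ annihilates wr
  have hXfwr : X_fᵀ *ᵥ wr = 0 := by
    funext j
    simp [hXf, mulVec, dotProduct, Fintype.sum_sum_type, hwr]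
  -- P * X = X
  have hdet : IsUnit (Xᵀ * X).det := (Matrix.isUnit_iff_isUnit_det _).mp hXinv
  have hPX : P * X = X := by
    rw [hP, Matrix.mul_assoc (X * (Xᵀ * X)⁻¹) Xᵀ X, Matrix.mul_assoc X (Xᵀ * X)⁻¹ (Xᵀ * X),
      Matrix.nonsing_inv_mul _ hdet, Matrix.mul_one]
  -- P * X_r = X_r
  have hPXr : P * X_r = X_r := by
    have h1 : X * Matrix.fromRows (1 : Matrix (Fin n_r) (Fin n_r) ℝ) (0 : Matrix (Fin n_f) (Fin n_r) ℝ) = X_r := by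
      rw [hX, Matrix.fromCols_mul_fromRows, Matrix.mul_one, Matrix.mul_zero, add_zero]
    rw [← h1, ← Matrix.mul_assoc, hPX]
  -- P is symmetric
  have hPsym : Pᵀ = P := by
    rw [hP]
    rw [Matrix.transpose_mul, Matrix.transpose_mul, Matrix.transpose_transpose,
      Matrix.transpose_nonsing_inv, Matrix.transpose_mul, Matrix.transpose_transpose,
      Matrix.mul_assoc]
  have hXrP : X_rᵀ * P = X_rᵀ := by
    calc X_rᵀ * P = X_rᵀ * Pᵀ := by rw [hPsym]
    _ = (P * X_r)ᵀ := by rw [Matrix.transpose_mul]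
    _ = X_rᵀ := by rw [hPXr]
  -- X_rᵀ annihilates (u - P u)
  have hz : X_rᵀ *ᵥ (u - P *ᵥ u) = 0 := by
    rw [Matrix.mulVec_sub, Matrix.mulVec_mulVec, hXrP, sub_self]
  -- P_t annihilates (u - P u)
  have hPtz : P_t *ᵥ (u - P *ᵥ u) = 0 := by
    have hXtz : X_tᵀ *ᵥ (u - P *ᵥ u) = 0 := by
      rw [hXt, Matrix.transpose_mul, ← Matrix.mulVec_mulVec, hz, Matrix.mulVec_zero]
    rw [hPt, Matrix.mul_assoc, ← Matrix.mulVec_mulVec, ← Matrix.mulVec_mulVec, hXtz,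
      Matrix.mulVec_zero, Matrix.mulVec_zero]
  -- hatw_t = P u
  have hwt : hatw_t = P *ᵥ u := by
    have : hatw_t = P *ᵥ u + P_t *ᵥ (u - P *ᵥ u) := by
      rw [hhatt, hhato, Matrix.sub_mulVec, Matrix.one_mulVec, Matrix.mulVec_sub]
      abel
    rw [this, hPtz, add_zero]
  -- y_r = X_rᵀ u
  have hyru : y_r = X_rᵀ *ᵥ u := by
    rw [hyr, hws, Matrix.mulVec_add, hXrwf, add_zero]
  have hfirst : X_rᵀ *ᵥ hatw_t - y_r = 0 := by
    rw [hwt, hyru, Matrix.mulVec_mulVec, hXrP, sub_self]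
  constructor
  · rw [hfirst]
    simp
  · -- second part
    have hyfu : y_f = X_fᵀ *ᵥ (wf + wl) := by
      rw [hyf, hws]
      rw [show wr + wl + wf = (wf + wl) + wr by abel, Matrix.mulVec_add, hXfwr, add_zero]
    have hdiff : X_fᵀ *ᵥ hatw_t - y_f = X_fᵀ *ᵥ (P *ᵥ u - (wf + wl)) := by
      rw [hwt, hyfu, Matrix.mulVec_sub]
    rw [hdiff]
    congr 1
    set v : Fin d_r ⊕ (Fin d_lap ⊕ Fin d_f) → ℝ := P *ᵥ u - (wf + wl) with hv
    have h1 : (X_f * X_fᵀ) *ᵥ v = X_f *ᵥ (X_fᵀ *ᵥ v) := by rw [Matrix.mulVec_mulVec]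
    rw [h1, Matrix.dotProduct_mulVec, Matrix.vecMul_transpose, dotProduct_comm]
end

section
/- Theorem 4.1, overlapping-features scenario, Option B (discarding overlapping features): the regularized fine-tuned model ŵ'_t satisfies L(ŵ'_t, D_r) = ‖(I − P_t) w_*^lap‖²_{(1/n_r)·X_r X_rᵀ} and L(ŵ'_t, D_f) = ‖P w_*^r + P_t w_*^lap − (w_*^f + w_*^lap)‖²_{(1/n_f)·X_f X_fᵀ}; in particular discarding the overlapping features makes the remaining loss nonzero in general. -/
open Matrix

private lemma sq_dot {m n : Type*} [Fintype m] [Fintype n]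
    (A : Matrix m n ℝ) (v : m → ℝ) :
    (Aᵀ *ᵥ v) ⬝ᵥ (Aᵀ *ᵥ v) = v ⬝ᵥ ((A * Aᵀ) *ᵥ v) := by
  rw [← Matrix.mulVec_mulVec, Matrix.dotProduct_mulVec v A, Matrix.mulVec_transpose]

/-- regularized_optionB_overlap -/
theorem regularized_optionB_overlap
    (d_r d_lap d_f n_r n_f n_t : ℕ)
    (hd_r : 0 < d_r) (hd_lap : 0 < d_lap) (hd_f : 0 < d_f)
    (hn_r : 0 < n_r) (hn_f : 0 < n_f) (hn_t : 0 < n_t)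
    (R : Matrix (Fin d_r) (Fin n_r) ℝ) (L1 : Matrix (Fin d_lap) (Fin n_r) ℝ)
    (L2 : Matrix (Fin d_lap) (Fin n_f) ℝ) (F : Matrix (Fin d_f) (Fin n_f) ℝ)
    (X_r : Matrix (Fin d_r ⊕ (Fin d_lap ⊕ Fin d_f)) (Fin n_r) ℝ)
    (hXr : X_r = Matrix.fromRows R (Matrix.fromRows L1 0))
    (X_f : Matrix (Fin d_r ⊕ (Fin d_lap ⊕ Fin d_f)) (Fin n_f) ℝ)
    (hXf : X_f = Matrix.fromRows 0 (Matrix.fromRows L2 F))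
    (X : Matrix (Fin d_r ⊕ (Fin d_lap ⊕ Fin d_f)) (Fin n_r ⊕ Fin n_f) ℝ)
    (hX : X = Matrix.fromCols X_r X_f)
    (hXinv : IsUnit (Xᵀ * X)) (hXrinv : IsUnit (X_rᵀ * X_r)) (hXfinv : IsUnit (X_fᵀ * X_f))
    (wr wl wf : Fin d_r ⊕ (Fin d_lap ⊕ Fin d_f) → ℝ)
    (hwr : ∀ i, wr (Sum.inr i) = 0)
    (hwl1 : ∀ i, wl (Sum.inl i) = 0) (hwl2 : ∀ i, wl (Sum.inr (Sum.inr i)) = 0)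
    (hwf1 : ∀ i, wf (Sum.inl i) = 0) (hwf2 : ∀ i, wf (Sum.inr (Sum.inl i)) = 0)
    (wstar : Fin d_r ⊕ (Fin d_lap ⊕ Fin d_f) → ℝ) (hws : wstar = wr + wl + wf)
    (y_r : Fin n_r → ℝ) (hyr : y_r = X_rᵀ *ᵥ wstar)
    (y_f : Fin n_f → ℝ) (hyf : y_f = X_fᵀ *ᵥ wstar)
    (S : Matrix (Fin n_r) (Fin n_t) ℝ)
    (X_t : Matrix (Fin d_r ⊕ (Fin d_lap ⊕ Fin d_f)) (Fin n_t) ℝ) (hXt : X_t = X_r * S)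
    (hXtinv : IsUnit (X_tᵀ * X_t))
    (P P_r P_t : Matrix (Fin d_r ⊕ (Fin d_lap ⊕ Fin d_f)) (Fin d_r ⊕ (Fin d_lap ⊕ Fin d_f)) ℝ)
    (hP : P = X * (Xᵀ * X)⁻¹ * Xᵀ)
    (hPr : P_r = X_r * (X_rᵀ * X_r)⁻¹ * X_rᵀ)
    (hPt : P_t = X_t * (X_tᵀ * X_t)⁻¹ * X_tᵀ)
    (hatw_o hatw_t : Fin d_r ⊕ (Fin d_lap ⊕ Fin d_f) → ℝ)
    (hhato : hatw_o = P *ᵥ wr)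
    (hhatt : hatw_t = (1 - P_t) *ᵥ hatw_o + P_t *ᵥ (wr + wl)) :
    (1 / (n_r : ℝ)) * ((X_rᵀ *ᵥ hatw_t - y_r) ⬝ᵥ (X_rᵀ *ᵥ hatw_t - y_r)) =
        (1 / (n_r : ℝ)) *
          (((1 - P_t) *ᵥ wl) ⬝ᵥ ((X_r * X_rᵀ) *ᵥ ((1 - P_t) *ᵥ wl))) ∧
      (1 / (n_f : ℝ)) * ((X_fᵀ *ᵥ hatw_t - y_f) ⬝ᵥ (X_fᵀ *ᵥ hatw_t - y_f)) =
        (1 / (n_f : ℝ)) *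
          ((P *ᵥ wr + P_t *ᵥ wl - (wf + wl)) ⬝ᵥ
            ((X_f * X_fᵀ) *ᵥ (P *ᵥ wr + P_t *ᵥ wl - (wf + wl)))) := by
  have hdet : IsUnit (Xᵀ * X).det := (Matrix.isUnit_iff_isUnit_det _).mp hXinv
  have hXE : X_r = X * Matrix.fromRows (1 : Matrix (Fin n_r) (Fin n_r) ℝ) (0 : Matrix (Fin n_f) (Fin n_r) ℝ) := by
    rw [hX, Matrix.fromCols_mul_fromRows]
    simp
  have key : Xᵀ * (X * (Xᵀ * X)⁻¹ * Xᵀ) = Xᵀ := by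
    rw [← Matrix.mul_assoc, ← Matrix.mul_assoc, Matrix.mul_nonsing_inv _ hdet, Matrix.one_mul]
  have hXrP : X_rᵀ * P = X_rᵀ := by
    calc X_rᵀ * P = (Matrix.fromRows (1 : Matrix (Fin n_r) (Fin n_r) ℝ) (0 : Matrix (Fin n_f) (Fin n_r) ℝ))ᵀ * (Xᵀ * P) := by
          rw [hXE, Matrix.transpose_mul, Matrix.mul_assoc]
      _ = (Matrix.fromRows (1 : Matrix (Fin n_r) (Fin n_r) ℝ) (0 : Matrix (Fin n_f) (Fin n_r) ℝ))ᵀ * Xᵀ := by rw [hP, key]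
      _ = X_rᵀ := by rw [← Matrix.transpose_mul, ← hXE]
  have hXtP : X_tᵀ * P = X_tᵀ := by
    rw [hXt, Matrix.transpose_mul, Matrix.mul_assoc, hXrP]
  have hPtP : P_t * P = P_t := by
    rw [hPt, Matrix.mul_assoc ((X_t * (X_tᵀ * X_t)⁻¹)) X_tᵀ P, hXtP]
  have hXrwf : X_rᵀ *ᵥ wf = 0 := by
    funext j
    simp [hXr, Matrix.mulVec, dotProduct, Fintype.sum_sum_type, hwf1, hwf2]
  have hXfwr : X_fᵀ *ᵥ wr = 0 := by
    funext j
    simp [hXf, Matrix.mulVec, dotProduct, Fintype.sum_sum_type, hwr]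
  have h1 : (1 - P_t) *ᵥ (P *ᵥ wr) = P *ᵥ wr - P_t *ᵥ wr := by
    rw [Matrix.sub_mulVec, Matrix.one_mulVec, Matrix.mulVec_mulVec, hPtP]
  have h2 : X_rᵀ *ᵥ (P *ᵥ wr) = X_rᵀ *ᵥ wr := by
    rw [Matrix.mulVec_mulVec, hXrP]
  have hdr : X_rᵀ *ᵥ hatw_t - y_r = -(X_rᵀ *ᵥ ((1 - P_t) *ᵥ wl)) := by
    rw [hhatt, hhato, hyr, hws, h1]
    simp only [Matrix.mulVec_add, Matrix.mulVec_sub, Matrix.sub_mulVec, Matrix.one_mulVec,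
      h2, hXrwf]
    abel
  have hdf : X_fᵀ *ᵥ hatw_t - y_f =
      X_fᵀ *ᵥ (P *ᵥ wr + P_t *ᵥ wl - (wf + wl)) := by
    rw [hhatt, hhato, hyf, hws, h1]
    simp only [Matrix.mulVec_add, Matrix.mulVec_sub, Matrix.sub_mulVec, Matrix.one_mulVec,
      hXfwr]
    abel
  constructor
  · rw [hdr, neg_dotProduct, dotProduct_neg, neg_neg, sq_dot]
  · rw [hdf, sq_dot]
end

section
/- Truncation of the pretrained model under distinct features: the vector ŵ_o obtained from the pretrained model w_o = P w_* by setting its last d_f coordinates to zero (keeping its first d_r coordinates) equals P w_*^r = P_r w_*^r; in particular, ŵ_o coincides with the golden model w_g. -/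
open Matrix

/-- truncated_pretrained_equals_golden_distinct -/
theorem truncated_pretrained_equals_golden_distinct
    (d_r d_f n_r n_f n_t : ℕ)
    (hd_r : 0 < d_r) (hd_f : 0 < d_f) (hn_r : 0 < n_r) (hn_f : 0 < n_f) (hn_t : 0 < n_t)
    (R : Matrix (Fin d_r) (Fin n_r) ℝ) (F : Matrix (Fin d_f) (Fin n_f) ℝ)
    (hR : IsUnit (Rᵀ * R)) (hF : IsUnit (Fᵀ * F))
    (X_r : Matrix (Fin d_r ⊕ Fin d_f) (Fin n_r) ℝ) (hXr : X_r = Matrix.fromRows R 0)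
    (X_f : Matrix (Fin d_r ⊕ Fin d_f) (Fin n_f) ℝ) (hXf : X_f = Matrix.fromRows 0 F)
    (X : Matrix (Fin d_r ⊕ Fin d_f) (Fin n_r ⊕ Fin n_f) ℝ) (hX : X = Matrix.fromCols X_r X_f)
    (hXinv : IsUnit (Xᵀ * X))
    (wr wf : Fin d_r ⊕ Fin d_f → ℝ)
    (hwr : ∀ i, wr (Sum.inr i) = 0) (hwf : ∀ i, wf (Sum.inl i) = 0)
    (wstar : Fin d_r ⊕ Fin d_f → ℝ) (hws : wstar = wr + wf)
    (y_r : Fin n_r → ℝ) (hyr : y_r = X_rᵀ *ᵥ wstar)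
    (y_f : Fin n_f → ℝ) (hyf : y_f = X_fᵀ *ᵥ wstar)
    (S : Matrix (Fin n_r) (Fin n_t) ℝ)
    (X_t : Matrix (Fin d_r ⊕ Fin d_f) (Fin n_t) ℝ) (hXt : X_t = X_r * S)
    (hXtinv : IsUnit (X_tᵀ * X_t))
    (P P_r P_t : Matrix (Fin d_r ⊕ Fin d_f) (Fin d_r ⊕ Fin d_f) ℝ)
    (hP : P = X * (Xᵀ * X)⁻¹ * Xᵀ)
    (hPr : P_r = X_r * (X_rᵀ * X_r)⁻¹ * X_rᵀ)
    (hPt : P_t = X_t * (X_tᵀ * X_t)⁻¹ * X_tᵀ)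
    (w_o w_t w_g : Fin d_r ⊕ Fin d_f → ℝ)
    (hwo : w_o = P *ᵥ wstar)
    (hwt : w_t = (1 - P_t) *ᵥ w_o + P_t *ᵥ wr)
    (hwg : w_g = P_r *ᵥ wr)
    (hatw_o : Fin d_r ⊕ Fin d_f → ℝ)
    (hhato1 : ∀ i, hatw_o (Sum.inl i) = w_o (Sum.inl i))
    (hhato2 : ∀ i, hatw_o (Sum.inr i) = 0) :
    hatw_o = P *ᵥ wr ∧ hatw_o = P_r *ᵥ wr ∧ hatw_o = w_g := by
  have hXrT : X_rᵀ = Matrix.fromCols Rᵀ 0 := by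
    rw [hXr, transpose_fromRows, transpose_zero]
  have hXfT : X_fᵀ = Matrix.fromCols 0 Fᵀ := by
    rw [hXf, transpose_fromRows, transpose_zero]
  have hXrtXr : X_rᵀ * X_r = Rᵀ * R := by
    rw [hXrT, hXr, fromCols_mul_fromRows]; simp
  have hXT : Xᵀ = Matrix.fromRows X_rᵀ X_fᵀ := by
    rw [hX, transpose_fromCols]
  have hXtX : Xᵀ * X = Matrix.fromBlocks (Rᵀ * R) 0 0 (Fᵀ * F) := by
    rw [hXT, hX, fromRows_mul_fromCols, hXrT, hXfT, hXr, hXf,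
      fromCols_mul_fromRows, fromCols_mul_fromRows, fromCols_mul_fromRows,
      fromCols_mul_fromRows]
    simp
  have hinv : (Xᵀ * X)⁻¹ = Matrix.fromBlocks (Rᵀ * R)⁻¹ 0 0 (Fᵀ * F)⁻¹ := by
    rw [hXtX, inv_fromBlocks_zero₂₁_of_isUnit_iff _ _ _ (by simp [hR, hF])]
    simp
  have hPsum : P = X_r * (Rᵀ * R)⁻¹ * X_rᵀ + X_f * (Fᵀ * F)⁻¹ * X_fᵀ := by
    rw [hP, hinv, hXT, hX, fromCols_mul_fromBlocks, fromCols_mul_fromRows]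
    simp [Matrix.mul_assoc]
  have hXftwr : X_fᵀ *ᵥ wr = 0 := by
    rw [hXfT]
    ext j
    simp [Matrix.mulVec, dotProduct, Fintype.sum_sum_type, hwr, fromCols]
  have hXrtwf : X_rᵀ *ᵥ wf = 0 := by
    rw [hXrT]
    ext j
    simp [Matrix.mulVec, dotProduct, Fintype.sum_sum_type, hwf, fromCols]
  have hPwr : P *ᵥ wr = P_r *ᵥ wr := by
    rw [hPsum, hPr, hXrtXr, Matrix.add_mulVec]
    have : (X_f * (Fᵀ * F)⁻¹ * X_fᵀ) *ᵥ wr = 0 := by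
      rw [Matrix.mul_assoc, ← Matrix.mulVec_mulVec, ← Matrix.mulVec_mulVec, hXftwr]
      simp
    rw [this, add_zero]
  have hPwf : P *ᵥ wf = X_f *ᵥ ((Fᵀ * F)⁻¹ *ᵥ (X_fᵀ *ᵥ wf)) := by
    rw [hPsum, Matrix.add_mulVec]
    have : (X_r * (Rᵀ * R)⁻¹ * X_rᵀ) *ᵥ wf = 0 := by
      rw [Matrix.mul_assoc, ← Matrix.mulVec_mulVec, ← Matrix.mulVec_mulVec, hXrtwf]
      simp
    rw [this, zero_add, Matrix.mul_assoc, ← Matrix.mulVec_mulVec, ← Matrix.mulVec_mulVec]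
  -- inr components of P_r *ᵥ wr vanish
  have hPrwr_inr : ∀ i, (P_r *ᵥ wr) (Sum.inr i) = 0 := by
    intro i
    rw [hPr, Matrix.mul_assoc, ← Matrix.mulVec_mulVec, hXr, fromRows_mulVec]
    simp
  -- inl components of P *ᵥ wf vanish
  have hPwf_inl : ∀ i, (P *ᵥ wf) (Sum.inl i) = 0 := by
    intro i
    rw [hPwf, hXf, fromRows_mulVec]
    simp
  have key : hatw_o = P_r *ᵥ wr := by
    funext j
    cases j with
    | inl i =>
      rw [hhato1, hwo, hws, Matrix.mulVec_add, ← hPwr]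
      simp [hPwf_inl i]
    | inr i =>
      rw [hhato2, hPrwr_inr]
  exact ⟨by rw [key, hPwr], key, by rw [key, hwg]⟩
end
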